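/- Let p be an odd prime and let k, m be positive integers with m dividing p−1 and (√p−1)² < km² < (√p+1)². If p divides k, then m = 1, and k = p or k = 2p when p ≤ 5, while k = p when p > 5. -/
import Mathlib


/-- Let `p` be an odd prime and `k, m` positive integers with `m ∣ p - 1` and
`(√p - 1)² < k·m² < (√p + 1)²`.  If `p ∣ k`, then `m = 1`, and `k = p` or `k = 2p` when
`p ≤ 5`, while `k = p` when `p > 5`. -/
theorem stmt_2 (p k m : ℕ) (hp : p.Prime) (hodd : Odd p) (hk : 0 < k) (hm : 0 < m)
    (hdvd : m ∣ p - 1)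
    (h1 : (Real.sqrt p - 1) ^ 2 < ((k * m ^ 2 : ℕ) : ℝ))
    (h2 : ((k * m ^ 2 : ℕ) : ℝ) < (Real.sqrt p + 1) ^ 2)
    (hpk : p ∣ k) :
    m = 1 ∧ (p ≤ 5 → k = p ∨ k = 2 * p) ∧ (5 < p → k = p) := by
  have hp3 : 3 ≤ p := by
    obtain ⟨j, hj⟩ := hodd
    have := hp.two_le
    omega
  set s := Real.sqrt p with hsdef
  have hs2 : s ^ 2 = (p : ℝ) := Real.sq_sqrt (by positivity)
  have hs0 : 0 ≤ s := Real.sqrt_nonneg _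
  have hpR : (3 : ℝ) ≤ p := by exact_mod_cast hp3
  obtain ⟨t, rfl⟩ := hpk
  have ht : 0 < t := Nat.pos_of_ne_zero (by rintro rfl; simp at hk)
  -- m = 1
  have hm1 : m = 1 := by
    by_contra hne
    have hm2 : 2 ≤ m := by omega
    have hge : (4 * p : ℝ) ≤ ((p * t * m ^ 2 : ℕ) : ℝ) := by
      have : 4 * p ≤ p * t * m ^ 2 :=
        calc 4 * p = p * 1 * 2 ^ 2 := by ring
        _ ≤ p * t * m ^ 2 := by
            apply Nat.mul_le_mul (Nat.mul_le_mul_left _ ht) (Nat.pow_le_pow_left hm2 2)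
      exact_mod_cast this
    nlinarith [h2, hs2, hs0, hpR]
  subst hm1
  -- t ≤ 2
  have ht2 : t ≤ 2 := by
    by_contra hgt
    have h3 : 3 ≤ t := by omega
    have hge : (3 * p : ℝ) ≤ ((p * t * 1 ^ 2 : ℕ) : ℝ) := by
      have : 3 * p ≤ p * t * 1 ^ 2 := by
        have := Nat.mul_le_mul_left p h3; nlinarith
      exact_mod_cast this
    nlinarith [h2, hs2, hs0, hpR]
  refine ⟨rfl, ?_, ?_⟩
  · intro _; interval_cases t
    · left; omega
    · right; omega
  · intro hp5
    have hp7 : 7 ≤ p := by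
      rcases hodd with ⟨j, hj⟩; omega
    have hpR7 : (7 : ℝ) ≤ p := by exact_mod_cast hp7
    interval_cases t
    · omega
    · exfalso
      have hge : (2 * p : ℝ) ≤ ((p * 2 * 1 ^ 2 : ℕ) : ℝ) := by push_cast; ring_nf; rfl
      nlinarith [h2, hs2, hs0, hpR7, sq_nonneg (s - 3)]
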